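/- The standard dual equivalence graph G_λ satisfies axiom (ax3): if T and U are joined by an i-edge, then σ(T)_{i−2} = −σ(U)_{i−2} implies σ(T)_{i−2} = −σ(T)_{i−1}, and σ(T)_{i+1} = −σ(U)_{i+1} implies σ(T)_{i+1} = −σ(T)_i. -/

import Mathlib

/-- A semistandard Young tableau (French convention), listed as rows from top
to bottom: positive entries, rows weakly increasing, row lengths weakly
increasing downwards, and entries strictly increasing up columns. -/
def IsSSYT (rows : List (List ℕ)) : Prop :=
  (∀ r ∈ rows, ∀ x ∈ r, 1 ≤ x) ∧
  (∀ r ∈ rows, r.Chain' (· ≤ ·)) ∧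
  rows.Chain' (fun upper lower =>
    upper.length ≤ lower.length ∧
    ∀ c < upper.length, lower.getD c 0 < upper.getD c 0)

/-- The reading word: rows read from top to bottom, left to right. -/
def readingWord (rows : List (List ℕ)) : List ℕ := rows.flatten

/-- A standard Young tableau with entries exactly 1, ..., n. -/
def IsSYT (n : ℕ) (rows : List (List ℕ)) : Prop :=
  IsSSYT rows ∧ (readingWord rows).Perm (List.range' 1 n)

/-- Swap the values x and y in a word. -/
def swapVals (x y : ℕ) (w : List ℕ) : List ℕ :=
  w.map (fun z => if z = x then y else if z = y then x else z)

/-- Haiman's elementary dual equivalence on the values i-1, i, i+1: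
applicable when i is not the middle one of the three (by position), it
exchanges i with the other outer value. -/
def EDE (i : ℕ) (u v : List ℕ) : Prop :=
  2 ≤ i ∧
  ((u.idxOf i < u.idxOf (i + 1) ∧ u.idxOf (i + 1) < u.idxOf (i - 1) ∧
      v = swapVals i (i - 1) u) ∨
   (u.idxOf i < u.idxOf (i - 1) ∧ u.idxOf (i - 1) < u.idxOf (i + 1) ∧
      v = swapVals i (i + 1) u) ∨
   (u.idxOf (i - 1) < u.idxOf (i + 1) ∧ u.idxOf (i + 1) < u.idxOf i ∧
      v = swapVals i (i - 1) u) ∨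
   (u.idxOf (i + 1) < u.idxOf (i - 1) ∧ u.idxOf (i - 1) < u.idxOf i ∧
      v = swapVals i (i + 1) u))

/-- The signature: +1 if j appears to the left of j+1, -1 otherwise. -/
def sgn (w : List ℕ) (j : ℕ) : ℤ :=
  if w.idxOf j < w.idxOf (j + 1) then 1 else -1


theorem idx_map (f : ℕ → ℕ) (hf : Function.Injective f) (z : ℕ) :
    ∀ u : List ℕ, (u.map f).idxOf (f z) = u.idxOf z
  | [] => rfl
  | a :: u => by
    simp only [List.map_cons, List.idxOf_cons, idx_map f hf z u]
    by_cases h : a = z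
    · simp [h]
    · have h2 : ¬ f a = f z := fun e => h (hf e)
      rw [beq_false_of_ne h, beq_false_of_ne h2]

theorem swap_inj (x y : ℕ) :
    Function.Injective (fun z => if z = x then y else if z = y then x else z) := by
  intro a b
  simp only
  split_ifs <;> omega

theorem indexOf_swapVals (x y z : ℕ) (u : List ℕ) :
    (swapVals x y u).idxOf (if z = x then y else if z = y then x else z) = u.idxOf z :=
  idx_map _ (swap_inj x y) z u

theorem swap_idx_other (x y z : ℕ) (hzx : z ≠ x) (hzy : z ≠ y) (u : List ℕ) :
    (swapVals x y u).idxOf z = u.idxOf z := by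
  have := indexOf_swapVals x y z u
  simpa [hzx, hzy] using this

theorem swap_idx_left (x y : ℕ) (u : List ℕ) :
    (swapVals x y u).idxOf y = u.idxOf x := by
  have := indexOf_swapVals x y x u
  simpa using this

/-- Axiom (ax3) for the standard dual equivalence graph. -/
theorem stmt16 (n i : ℕ) (T U : List (List ℕ)) (hT : IsSYT n T) (hU : IsSYT n U)
    (hsh : U.map List.length = T.map List.length)
    (h : EDE i (readingWord T) (readingWord U)) :
    (sgn (readingWord T) (i - 2) = - sgn (readingWord U) (i - 2) →
      sgn (readingWord T) (i - 2) = - sgn (readingWord T) (i - 1)) ∧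
    (sgn (readingWord T) (i + 1) = - sgn (readingWord U) (i + 1) →
      sgn (readingWord T) (i + 1) = - sgn (readingWord T) i) := by
  obtain ⟨hi, hc⟩ := h
  set u := readingWord T
  have e1 : i - 2 + 1 = i - 1 := by omega
  have e2 : i - 1 + 1 = i := by omega
  have e3 : i + 1 + 1 = i + 2 := rfl
  rcases hc with ⟨h1, h2, hv⟩ | ⟨h1, h2, hv⟩ | ⟨h1, h2, hv⟩ | ⟨h1, h2, hv⟩ <;>
    rw [hv] <;> simp only [sgn, e1, e2, e3] <;>
    rw [swap_idx_other _ _ (i-2) (by omega) (by omega),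
        swap_idx_other _ _ (i+2) (by omega) (by omega)]
  · rw [swap_idx_left, swap_idx_other _ _ (i+1) (by omega) (by omega)]
    constructor <;> intro hyp <;> split_ifs at hyp ⊢ <;> omega
  · rw [swap_idx_left, swap_idx_other _ _ (i-1) (by omega) (by omega)]
    constructor <;> intro hyp <;> split_ifs at hyp ⊢ <;> omega
  · rw [swap_idx_left, swap_idx_other _ _ (i+1) (by omega) (by omega)]
    constructor <;> intro hyp <;> split_ifs at hyp ⊢ <;> omega
  · rw [swap_idx_left, swap_idx_other _ _ (i-1) (by omega) (by omega)]
    constructor <;> intro hyp <;> split_ifs at hyp ⊢ <;> omega
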